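/- Let n = 2^d ≥ 2 and A, B polynomials of degree < n over a commutative ring. Then A·B = ((1−x^n)/(1−x))·(A ⊙ B) − ∑_{m=1}^{n−1} ((1−x^{2^{⌊log₂ m⌋}})/((1−x)·x^m)) · ( ((1−x^n)/(1−x^{2^{⌊log₂ m⌋+1}}))·x^m ⊙ (1−x^{2^{⌊log₂ m⌋}})·A ) · ( ((1−x^n)/(1−x^{2^{⌊log₂ m⌋+1}}))·x^m ⊙ (1−x^{2^{⌊log₂ m⌋}})·B ). -/

import Mathlib

open Polynomial Finset

/-- Termwise (Hadamard) product of polynomials: the `r`-th coefficient of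
`hadamard P Q` is `P.coeff r * Q.coeff r`. -/
noncomputable def hadamard {R : Type*} [CommRing R] (P Q : R[X]) : R[X] :=
  ∑ r ∈ P.support, Polynomial.C (P.coeff r * Q.coeff r) * X ^ r

namespace PFK


private lemma mod_two_pow_succ (x L : ℕ) :
    x % 2 ^ (L + 1) = x % 2 ^ L + (if x.testBit L then 2 ^ L else 0) := by
  rw [pow_succ, Nat.mod_mul, Nat.testBit_eq_decide_div_mod_eq]
  rcases Nat.mod_two_eq_zero_or_one (x / 2 ^ L) with h | h <;> simp [h]

private lemma testBit_ge {L x : ℕ} (h : x.testBit L = true) : 2 ^ L + x % 2 ^ L ≤ x := by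
  have h1 := mod_two_pow_succ x L
  have h2 : x % 2 ^ (L + 1) ≤ x := Nat.mod_le _ _
  rw [h] at h1
  simp at h1
  omega

/-- `W L u` is the exponent contributed by the `A`-side hadamard factor, minus `m₀`. -/
private def W (L u : ℕ) : ℕ := if u.testBit L then u - (2 ^ L + u % 2 ^ L) else u - u % 2 ^ L

/-- `W' L v` is the exponent contributed by the `B`-side factor (including the `X^m` factor). -/
private def W' (L v : ℕ) : ℕ := if v.testBit L then v else v + 2 ^ L

/-- Signed indicator for the coefficient of the level-`L` correction term. -/
private def Efun (L u v : ℕ) (k : ℤ) : ℤ :=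
  if u % 2 ^ L = v % 2 ^ L ∧ (W L u + W' L v : ℤ) ≤ k ∧ k < (W L u + W' L v : ℤ) + 2 ^ L
  then (if u.testBit L = v.testBit L then 1 else -1) else 0

private lemma Efun_shift (L d u v : ℕ) (hL : L < d) (k : ℤ) :
    Efun L u v k
      = Efun L (u % 2 ^ d) (v % 2 ^ d) (k - (u - u % 2 ^ d : ℕ) - (v - v % 2 ^ d : ℕ)) := by
  have h1 : (u % 2 ^ d) % 2 ^ L = u % 2 ^ L := Nat.mod_mod_of_dvd u (pow_dvd_pow 2 hL.le)
  have h2 : (v % 2 ^ d) % 2 ^ L = v % 2 ^ L := Nat.mod_mod_of_dvd v (pow_dvd_pow 2 hL.le)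
  have h3 : (u % 2 ^ d).testBit L = u.testBit L := by
    rw [Nat.testBit_mod_two_pow]; simp [hL]
  have h4 : (v % 2 ^ d).testBit L = v.testBit L := by
    rw [Nat.testBit_mod_two_pow]; simp [hL]
  have hud : u % 2 ^ d ≤ u := Nat.mod_le _ _
  have hvd : v % 2 ^ d ≤ v := Nat.mod_le _ _
  have h5 : W L u = W L (u % 2 ^ d) + (u - u % 2 ^ d) := by
    unfold W
    rw [h3]
    split
    · have g1 := testBit_ge (by assumption : u.testBit L = true)
      have g2 := testBit_ge (by rw [h3]; assumption : (u % 2 ^ d).testBit L = true)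
      omega
    · have g1 : u % 2 ^ L ≤ u % 2 ^ d := by rw [← h1]; exact Nat.mod_le _ _
      omega
  have h6 : W' L v = W' L (v % 2 ^ d) + (v - v % 2 ^ d) := by
    unfold W'
    rw [h4]
    split <;> omega
  unfold Efun
  rw [h1, h2, h3, h4, h5, h6]
  refine if_congr ?_ rfl rfl
  constructor <;> intro h <;> refine ⟨h.1, ?_, ?_⟩ <;> push_cast at * <;> omega

private lemma Esum : ∀ (d u v : ℕ), u < 2 ^ d → v < 2 ^ d → ∀ k : ℤ,
    (∑ L ∈ Finset.range d, Efun L u v k)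
      = (if u = v ∧ (u : ℤ) ≤ k ∧ k < u + 2 ^ d then 1 else 0)
        - (if k = u + v then 1 else 0) := by
  intro d
  induction d with
  | zero =>
      intro u v hu hv k
      interval_cases u
      interval_cases v
      simp only [Finset.range_zero, Finset.sum_empty, pow_zero, Nat.cast_zero, true_and, eq_self_iff_true]
      split_ifs <;> omega
  | succ d ih =>
      intro u v hu hv k
      have hp : 0 < 2 ^ d := Nat.pow_pos (by norm_num)
      have hu' : u % 2 ^ d < 2 ^ d := Nat.mod_lt _ hp
      have hv' : v % 2 ^ d < 2 ^ d := Nat.mod_lt _ hp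
      rw [Finset.sum_range_succ,
        Finset.sum_congr rfl (fun L hL => Efun_shift L d u v (Finset.mem_range.1 hL) k),
        ih _ _ hu' hv' _]
      have hu2 : u = u % 2 ^ d + (if u.testBit d then 2 ^ d else 0) := by
        have := mod_two_pow_succ u d
        rwa [Nat.mod_eq_of_lt hu] at this
      have hv2 : v = v % 2 ^ d + (if v.testBit d then 2 ^ d else 0) := by
        have := mod_two_pow_succ v d
        rwa [Nat.mod_eq_of_lt hv] at this
      have hWd : W d u = 0 := by
        unfold W; split_ifs at hu2 ⊢ <;> omega
      have hW'd : W' d v = v % 2 ^ d + 2 ^ d := by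
        unfold W'; split_ifs at hv2 ⊢ <;> omega
      have hmodd : u % 2 ^ (d : ℕ) = u % 2 ^ d := rfl
      have hpow : (2 : ℤ) ^ (d + 1) = 2 ^ d + 2 ^ d := by ring
      have hpown : (2 : ℕ) ^ (d + 1) = 2 ^ d + 2 ^ d := by ring
      have hcast : ((2 ^ d : ℕ) : ℤ) = 2 ^ d := by push_cast; ring
      clear ih
      unfold Efun
      rw [hWd, hW'd]
      by_cases hbu : u.testBit d <;> by_cases hbv : v.testBit d <;>
        simp only [hbu, hbv, if_true, if_false, Bool.true_eq_false, Bool.false_eq_true,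
          Nat.cast_add, Nat.cast_zero, Nat.cast_pow, Nat.cast_ofNat, zero_add] at hu2 hv2 ⊢ <;>
        split_ifs <;> omega


variable {R : Type*} [CommRing R]


lemma coeff_hadamard (P Q : R[X]) (k : ℕ) :
    (hadamard P Q).coeff k = P.coeff k * Q.coeff k := by
  rw [hadamard, Polynomial.finset_sum_coeff]
  simp only [Polynomial.coeff_C_mul, Polynomial.coeff_X_pow, mul_ite, mul_one, mul_zero]
  rw [Finset.sum_ite_eq P.support k (fun r => P.coeff r * Q.coeff r)]
  split_ifs with h
  · rfl
  · rw [Polynomial.notMem_support_iff.1 h, zero_mul]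

lemma hadamard_sum_left (s : Finset ℕ) (f : ℕ → R[X]) (Q : R[X]) :
    hadamard (∑ i ∈ s, f i) Q = ∑ i ∈ s, hadamard (f i) Q := by
  ext k
  simp [coeff_hadamard, Polynomial.finset_sum_coeff, Finset.sum_mul]

lemma hadamard_sum_right (s : Finset ℕ) (f : ℕ → R[X]) (P : R[X]) :
    hadamard P (∑ i ∈ s, f i) = ∑ i ∈ s, hadamard P (f i) := by
  ext k
  simp [coeff_hadamard, Polynomial.finset_sum_coeff, Finset.mul_sum]

lemma hadamard_C_mul_left (a : R) (P Q : R[X]) :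
    hadamard (C a * P) Q = C a * hadamard P Q := by
  ext k; simp [coeff_hadamard, mul_assoc]

lemma hadamard_C_mul_right (a : R) (P Q : R[X]) :
    hadamard P (C a * Q) = C a * hadamard P Q := by
  ext k; simp [coeff_hadamard]; ring

lemma hadamard_add_left (P₁ P₂ Q : R[X]) :
    hadamard (P₁ + P₂) Q = hadamard P₁ Q + hadamard P₂ Q := by
  ext k; simp [coeff_hadamard]; ring

lemma hadamard_add_right (P Q₁ Q₂ : R[X]) :
    hadamard P (Q₁ + Q₂) = hadamard P Q₁ + hadamard P Q₂ := by
  ext k; simp [coeff_hadamard]; ring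

lemma hadamard_zero_left (Q : R[X]) : hadamard 0 Q = 0 := by
  ext k; simp [coeff_hadamard]

/-- Coefficients of `(1 + X + ⋯ + X^(N-1)) * X^c`. -/
lemma coeff_range_mul_X_pow (N c k : ℕ) :
    ((∑ i ∈ Finset.range N, (X : R[X]) ^ i) * X ^ c).coeff k
      = if c ≤ k ∧ k < c + N then 1 else 0 := by
  rw [Finset.sum_mul]
  simp_rw [← pow_add]
  rw [Polynomial.finset_sum_coeff]
  simp only [Polynomial.coeff_X_pow]
  by_cases h : c ≤ k ∧ k < c + N
  · rw [if_pos h, Finset.sum_eq_single_of_mem (k - c) (Finset.mem_range.2 (by omega))]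
    · rw [if_pos (by omega)]
    · intro b _ hb
      rw [if_neg (by omega)]
  · rw [if_neg h]
    apply Finset.sum_eq_zero
    intro i hi
    have := Finset.mem_range.1 hi
    rw [if_neg (by omega)]

/-- The sequence of coefficients of `Q` along the arithmetic progression `e*i + m`. -/
noncomputable def sliceC (e m N : ℕ) (Q : R[X]) : R[X] :=
  ∑ i ∈ Finset.range N, C (Q.coeff (e * i + m)) * X ^ (e * i)

lemma sliceC_sum (e m N : ℕ) (s : Finset ℕ) (f : ℕ → R[X]) :
    sliceC e m N (∑ j ∈ s, f j) = ∑ j ∈ s, sliceC e m N (f j) := by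
  unfold sliceC
  simp_rw [Polynomial.finset_sum_coeff, map_sum, Finset.sum_mul]
  rw [Finset.sum_comm]

lemma sliceC_C_mul (e m N : ℕ) (a : R) (Q : R[X]) :
    sliceC e m N (C a * Q) = C a * sliceC e m N Q := by
  unfold sliceC
  simp_rw [Polynomial.coeff_C_mul, map_mul, Finset.mul_sum, mul_assoc]

lemma sliceC_add (e m N : ℕ) (Q₁ Q₂ : R[X]) :
    sliceC e m N (Q₁ + Q₂) = sliceC e m N Q₁ + sliceC e m N Q₂ := by
  unfold sliceC
  simp_rw [Polynomial.coeff_add, map_add, add_mul, Finset.sum_add_distrib]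

lemma sliceC_sub (e m N : ℕ) (Q₁ Q₂ : R[X]) :
    sliceC e m N (Q₁ - Q₂) = sliceC e m N Q₁ - sliceC e m N Q₂ := by
  unfold sliceC
  simp_rw [Polynomial.coeff_sub, map_sub, sub_mul, Finset.sum_sub_distrib]

lemma sliceC_zero (e m N : ℕ) : sliceC e m N (0 : R[X]) = 0 := by
  simp [sliceC]

/-- Factoring `X^m` out of a hadamard product with the mask `∑ X^(e*i) * X^m`. -/
lemma hadamard_mask (e m N : ℕ) (Q : R[X]) :
    hadamard ((∑ i ∈ Finset.range N, (X : R[X]) ^ (e * i)) * X ^ m) Q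
      = X ^ m * sliceC e m N Q := by
  ext k
  rw [coeff_hadamard, sliceC, Finset.mul_sum, Finset.sum_mul, Polynomial.finset_sum_coeff,
    Polynomial.finset_sum_coeff, Finset.sum_mul]
  refine Finset.sum_congr rfl fun i _ => ?_
  rw [← pow_add, Polynomial.coeff_X_pow]
  have h : (X : R[X]) ^ m * (C (Q.coeff (e * i + m)) * X ^ (e * i))
      = C (Q.coeff (e * i + m)) * X ^ (e * i + m) := by
    rw [pow_add]; ring
  rw [h, Polynomial.coeff_C_mul, Polynomial.coeff_X_pow]
  split_ifs with hk
  · rw [hk, one_mul, mul_one]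
  · rw [zero_mul, mul_zero]

lemma sliceC_X_pow (e m N w : ℕ) (he : 0 < e) (hm : m < e) (hw : w < e * N + m) :
    sliceC e m N ((X : R[X]) ^ w) = if w % e = m then X ^ (w - m) else 0 := by
  unfold sliceC
  simp only [Polynomial.coeff_X_pow]
  have hdm := Nat.div_add_mod w e
  by_cases h : w % e = m
  · rw [if_pos h]
    have hwN : w / e < N := by
      by_contra hc
      have : e * N ≤ e * (w / e) := Nat.mul_le_mul_left e (by omega)
      omega
    rw [Finset.sum_eq_single_of_mem (w / e) (Finset.mem_range.2 hwN)]
    · rw [if_pos (by omega)]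
      have hh : e * (w / e) = w - m := by omega
      rw [hh, map_one, one_mul]
    · intro b _ hb
      rw [if_neg ?_, map_zero, zero_mul]
      intro hc
      apply hb
      have : e * b = e * (w / e) := by omega
      exact Nat.eq_of_mul_eq_mul_left he this
  · rw [if_neg h]
    apply Finset.sum_eq_zero
    intro i _
    rw [if_neg ?_, map_zero, zero_mul]
    intro hc
    apply h
    rw [← hc, Nat.mul_add_mod, Nat.mod_eq_of_lt hm]

/-- The `X^m`-free form of the `m`-th correction term. -/
noncomputable def Gterm (d m : ℕ) (A B : R[X]) : R[X] :=
  (∑ s ∈ Finset.range (2 ^ Nat.log 2 m), (X : R[X]) ^ s) *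
    sliceC (2 ^ (Nat.log 2 m + 1)) m (2 ^ (d - Nat.log 2 m - 1))
      ((1 - (X : R[X]) ^ (2 ^ (Nat.log 2 m))) * A) *
    (X ^ m * sliceC (2 ^ (Nat.log 2 m + 1)) m (2 ^ (d - Nat.log 2 m - 1))
      ((1 - (X : R[X]) ^ (2 ^ (Nat.log 2 m))) * B))

lemma term_eq_Gterm (d m : ℕ) (A B : R[X]) :
    ((∑ i ∈ Finset.range (2 ^ (Nat.log 2 m)), (X : R[X]) ^ i) *
      hadamard
        ((∑ i ∈ Finset.range (2 ^ (d - Nat.log 2 m - 1)),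
            (X : R[X]) ^ (2 ^ (Nat.log 2 m + 1) * i)) * X ^ m)
        ((1 - (X : R[X]) ^ (2 ^ (Nat.log 2 m))) * A) *
      hadamard
        ((∑ i ∈ Finset.range (2 ^ (d - Nat.log 2 m - 1)),
            (X : R[X]) ^ (2 ^ (Nat.log 2 m + 1) * i)) * X ^ m)
        ((1 - (X : R[X]) ^ (2 ^ (Nat.log 2 m))) * B)) /ₘ (X ^ m)
      = Gterm d m A B := by
  rw [hadamard_mask, hadamard_mask]
  have h : (∑ i ∈ Finset.range (2 ^ (Nat.log 2 m)), (X : R[X]) ^ i) *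
      (X ^ m * sliceC (2 ^ (Nat.log 2 m + 1)) m (2 ^ (d - Nat.log 2 m - 1))
        ((1 - (X : R[X]) ^ (2 ^ (Nat.log 2 m))) * A)) *
      (X ^ m * sliceC (2 ^ (Nat.log 2 m + 1)) m (2 ^ (d - Nat.log 2 m - 1))
        ((1 - (X : R[X]) ^ (2 ^ (Nat.log 2 m))) * B))
      = X ^ m * Gterm d m A B := by
    simp only [Gterm]; ring
  rw [h, mul_divByMonic_cancel_left _ (monic_X_pow m)]

lemma hadamard_X_pow (u v : ℕ) :
    hadamard ((X : R[X]) ^ u) (X ^ v) = if u = v then (X : R[X]) ^ u else 0 := by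
  by_cases h : u = v
  · subst h
    rw [if_pos rfl]
    ext k
    rw [coeff_hadamard, Polynomial.coeff_X_pow]
    split_ifs <;> ring
  · rw [if_neg h]
    ext k
    rw [coeff_hadamard, Polynomial.coeff_X_pow, Polynomial.coeff_X_pow, Polynomial.coeff_zero]
    split_ifs with h1 h2 h3
    · exact absurd (by omega : u = v) h
    · ring
    · ring
    · ring

lemma Shad (d u v k : ℕ) :
    ((∑ i ∈ Finset.range (2 ^ d), (X : R[X]) ^ i) * hadamard ((X : R[X]) ^ u) (X ^ v)).coeff k
      = if u = v ∧ u ≤ k ∧ k < u + 2 ^ d then 1 else 0 := by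
  rw [hadamard_X_pow]
  by_cases h : u = v
  · rw [if_pos h, coeff_range_mul_X_pow]
    exact if_congr (by simp [h]) rfl rfl
  · rw [if_neg h, mul_zero, Polynomial.coeff_zero, if_neg (by tauto)]

lemma sum_blocks {M : Type*} [AddCommMonoid M] (d : ℕ) (f : ℕ → M) :
    ∑ m ∈ Finset.Ico 1 (2 ^ d), f m
      = ∑ L ∈ Finset.range d, ∑ m ∈ Finset.Ico (2 ^ L) (2 ^ (L + 1)), f m := by
  induction d with
  | zero => simp
  | succ d ih =>
      rw [Finset.sum_range_succ, ← ih,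
        Finset.sum_Ico_consecutive f Nat.one_le_two_pow
          (Nat.pow_le_pow_right (by norm_num) (by omega))]

private lemma mod_two_pow_succ_add (L v : ℕ) :
    (2 ^ L + v) % 2 ^ (L + 1) = v % 2 ^ L + (if v.testBit L then 0 else 2 ^ L) := by
  have h := mod_two_pow_succ (2 ^ L + v) L
  have h1 : (2 ^ L + v) % 2 ^ L = v % 2 ^ L := Nat.add_mod_left _ _
  have hbit : (2 ^ L + v).testBit L = !v.testBit L := by
    rw [Nat.testBit_eq_decide_div_mod_eq, Nat.testBit_eq_decide_div_mod_eq, add_comm,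
      Nat.add_div_right _ (by positivity : 0 < 2 ^ L)]
    rcases Nat.mod_two_eq_zero_or_one (v / 2 ^ L) with hp | hp <;>
      simp [Nat.add_mod, hp]
  rw [h1, hbit] at h
  cases hb : v.testBit L <;> rw [hb] at h <;> simp at h ⊢ <;> omega

lemma block_collapse (d L u v : ℕ) (hL : L < d) (hu : u < 2 ^ d) (hv : v < 2 ^ d) :
    (∑ m ∈ Finset.Ico (2 ^ L) (2 ^ (L + 1)), Gterm d m ((X : R[X]) ^ u) ((X : R[X]) ^ v))
      = Gterm d (2 ^ L + u % 2 ^ L) ((X : R[X]) ^ u) ((X : R[X]) ^ v) := by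
  have hmodu : u % 2 ^ L < 2 ^ L := Nat.mod_lt _ (by positivity)
  have hps : (2:ℕ) ^ (L + 1) = 2 ^ L + 2 ^ L := by ring
  apply Finset.sum_eq_single_of_mem
  · exact Finset.mem_Ico.2 ⟨by omega, by omega⟩
  · intro m hm hne
    obtain ⟨hm1, hm2⟩ := Finset.mem_Ico.1 hm
    have hlog : Nat.log 2 m = L := Nat.log_eq_of_pow_le_of_lt_pow hm1 hm2
    have hpow : 2 ^ (L + 1) * 2 ^ (d - L - 1) = 2 ^ d := by
      rw [← pow_add]; congr 1; omega
    have hepos : 0 < 2 ^ (L + 1) := by positivity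
    have hA : (1 - (X : R[X]) ^ (2 ^ L)) * X ^ u = X ^ u - X ^ (2 ^ L + u) := by
      rw [pow_add]; ring
    simp only [Gterm, hlog]
    rw [hA, sliceC_sub,
      sliceC_X_pow _ _ _ _ hepos hm2 (by rw [hpow]; omega),
      sliceC_X_pow _ _ _ _ hepos hm2 (by rw [hpow]; omega)]
    rw [if_neg ?_, if_neg ?_]
    · simp
    · intro hc
      have h := mod_two_pow_succ_add L u
      split_ifs at h <;> omega
    · intro hc
      have h := mod_two_pow_succ u L
      split_ifs at h <;> omega


lemma coeff_SXX (N a b c k : ℕ) :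
    (((∑ s ∈ Finset.range N, (X : R[X]) ^ s) * X ^ a) * (X ^ b * X ^ c)).coeff k
      = if a + b + c ≤ k ∧ k < a + b + c + N then 1 else 0 := by
  have h : ((∑ s ∈ Finset.range N, (X : R[X]) ^ s) * X ^ a) * (X ^ b * X ^ c)
      = (∑ s ∈ Finset.range N, (X : R[X]) ^ s) * X ^ (a + b + c) := by
    rw [pow_add, pow_add]; ring
  rw [h, coeff_range_mul_X_pow]

lemma Gterm_coeff (d L u v k : ℕ) (hL : L < d) (hu : u < 2 ^ d) (hv : v < 2 ^ d) :
    (Gterm d (2 ^ L + u % 2 ^ L) ((X : R[X]) ^ u) ((X : R[X]) ^ v)).coeff k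
      = ((Efun L u v (k : ℤ) : ℤ) : R) := by
  have hmodu : u % 2 ^ L < 2 ^ L := Nat.mod_lt _ (by positivity)
  have hmodv : v % 2 ^ L < 2 ^ L := Nat.mod_lt _ (by positivity)
  have huu : u % 2 ^ L ≤ u := Nat.mod_le _ _
  have hvv : v % 2 ^ L ≤ v := Nat.mod_le _ _
  have hps : (2:ℕ) ^ (L + 1) = 2 ^ L + 2 ^ L := by ring
  have hm1 : 2 ^ L ≤ 2 ^ L + u % 2 ^ L := by omega
  have hm2 : 2 ^ L + u % 2 ^ L < 2 ^ (L + 1) := by omega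
  have hlog : Nat.log 2 (2 ^ L + u % 2 ^ L) = L := Nat.log_eq_of_pow_le_of_lt_pow hm1 hm2
  have hpow : 2 ^ (L + 1) * 2 ^ (d - L - 1) = 2 ^ d := by
    rw [← pow_add]; congr 1; omega
  have hepos : 0 < 2 ^ (L + 1) := by positivity
  have hA : (1 - (X : R[X]) ^ (2 ^ L)) * X ^ u = X ^ u - X ^ (2 ^ L + u) := by
    rw [pow_add]; ring
  have hB : (1 - (X : R[X]) ^ (2 ^ L)) * X ^ v = X ^ v - X ^ (2 ^ L + v) := by
    rw [pow_add]; ring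
  have hcast : ((2 ^ L : ℕ) : ℤ) = 2 ^ L := by push_cast; ring
  have hmsu := mod_two_pow_succ u L
  have hmsu' := mod_two_pow_succ_add L u
  have hmsv := mod_two_pow_succ v L
  have hmsv' := mod_two_pow_succ_add L v
  simp only [Gterm, hlog]
  rw [hA, hB, sliceC_sub, sliceC_sub,
    sliceC_X_pow _ _ _ _ hepos hm2 (by rw [hpow]; omega),
    sliceC_X_pow _ _ _ _ hepos hm2 (by rw [hpow]; omega),
    sliceC_X_pow _ _ _ _ hepos hm2 (by rw [hpow]; omega),
    sliceC_X_pow _ _ _ _ hepos hm2 (by rw [hpow]; omega)]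
  by_cases huv : u % 2 ^ L = v % 2 ^ L
  · by_cases hbu : u.testBit L <;> by_cases hbv : v.testBit L <;>
      simp only [hbu, hbv, if_true, if_false, Bool.false_eq_true, Bool.true_eq_false,
        ite_true, ite_false, if_neg, Nat.add_zero] at hmsu hmsu' hmsv hmsv'
    · have hgu : 2 ^ L + u % 2 ^ L ≤ u := testBit_ge hbu
      have hgv : 2 ^ L + v % 2 ^ L ≤ v := testBit_ge hbv
      rw [if_pos (by omega), if_neg (by omega), if_pos (by omega), if_neg (by omega)]
      simp only [sub_zero, zero_sub, mul_neg, neg_mul, neg_neg, Polynomial.coeff_neg]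
      rw [coeff_SXX]
      unfold Efun W W'
      simp only [hbu, hbv, if_true]
      split_ifs <;> first | (exfalso; assumption) | (exfalso; omega) | norm_num
    · have hgu : 2 ^ L + u % 2 ^ L ≤ u := testBit_ge hbu
      rw [if_pos (by omega), if_neg (by omega), if_neg (by omega), if_pos (by omega)]
      simp only [sub_zero, zero_sub, mul_neg, neg_mul, neg_neg, Polynomial.coeff_neg]
      rw [coeff_SXX]
      unfold Efun W W'
      simp only [hbu, hbv, if_true, if_false, Bool.true_eq_false]
      split_ifs <;> first | (exfalso; assumption) | (exfalso; omega) | norm_num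
    · have hgv : 2 ^ L + v % 2 ^ L ≤ v := testBit_ge hbv
      rw [if_neg (by omega), if_pos (by omega), if_pos (by omega), if_neg (by omega)]
      simp only [sub_zero, zero_sub, mul_neg, neg_mul, neg_neg, Polynomial.coeff_neg]
      rw [coeff_SXX]
      unfold Efun W W'
      simp only [hbu, hbv, if_true, if_false, Bool.false_eq_true]
      split_ifs <;> first | (exfalso; assumption) | (exfalso; omega) | norm_num
    · rw [if_neg (by omega), if_pos (by omega), if_neg (by omega), if_pos (by omega)]
      simp only [sub_zero, zero_sub, mul_neg, neg_mul, neg_neg, Polynomial.coeff_neg]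
      rw [coeff_SXX]
      unfold Efun W W'
      simp only [hbu, hbv, if_true, if_false]
      split_ifs <;> first | (exfalso; assumption) | (exfalso; omega) | norm_num
  · rw [if_neg (show ¬(v % 2 ^ (L + 1) = 2 ^ L + u % 2 ^ L) by
        split_ifs at hmsv <;> omega),
      if_neg (show ¬((2 ^ L + v) % 2 ^ (L + 1) = 2 ^ L + u % 2 ^ L) by
        split_ifs at hmsv' <;> omega)]
    simp only [sub_zero, mul_zero, Polynomial.coeff_zero]
    unfold Efun
    rw [if_neg (fun hc => huv hc.1)]
    simp

lemma main_mono (d u v : ℕ) (hu : u < 2 ^ d) (hv : v < 2 ^ d) :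
    (∑ i ∈ Finset.range (2 ^ d), (X : R[X]) ^ i) * hadamard ((X : R[X]) ^ u) ((X : R[X]) ^ v)
      - (∑ m ∈ Finset.Icc 1 (2 ^ d - 1), Gterm d m ((X : R[X]) ^ u) ((X : R[X]) ^ v))
      = (X : R[X]) ^ u * (X : R[X]) ^ v := by
  have h1 : (1:ℕ) ≤ 2 ^ d := Nat.one_le_two_pow
  have hIcc : Finset.Icc 1 (2 ^ d - 1) = Finset.Ico 1 (2 ^ d) := by
    rw [← Finset.Ico_add_one_right_eq_Icc]; congr 1; omega
  rw [hIcc, sum_blocks,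
    Finset.sum_congr rfl
      (fun L hL => block_collapse d L u v (Finset.mem_range.1 hL) hu hv)]
  ext k
  rw [Polynomial.coeff_sub, Polynomial.finset_sum_coeff, Shad,
    Finset.sum_congr rfl
      (fun L hL => Gterm_coeff d L u v k (Finset.mem_range.1 hL) hu hv),
    ← Int.cast_sum, Esum d u v hu hv (k : ℤ), ← pow_add, Polynomial.coeff_X_pow]
  rw [Int.cast_sub]
  have hcast : ((2 ^ d : ℕ) : ℤ) = 2 ^ d := by push_cast; ring
  simp only [apply_ite (fun z : ℤ => (z : R)), Int.cast_one, Int.cast_zero]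
  split_ifs <;> first | (exfalso; assumption) | (exfalso; omega) | norm_num

private noncomputable def RHSfun (d : ℕ) (A B : R[X]) : R[X] :=
  (∑ i ∈ Finset.range (2 ^ d), (X : R[X]) ^ i) * hadamard A B
    - ∑ m ∈ Finset.Icc 1 (2 ^ d - 1), Gterm d m A B

lemma Gterm_add_left (d m : ℕ) (A₁ A₂ B : R[X]) :
    Gterm d m (A₁ + A₂) B = Gterm d m A₁ B + Gterm d m A₂ B := by
  simp only [Gterm, mul_add, sliceC_add]
  try ring

lemma Gterm_add_right (d m : ℕ) (A B₁ B₂ : R[X]) :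
    Gterm d m A (B₁ + B₂) = Gterm d m A B₁ + Gterm d m A B₂ := by
  simp only [Gterm, mul_add, sliceC_add]
  try ring

lemma Gterm_C_mul_left (d m : ℕ) (a : R) (A B : R[X]) :
    Gterm d m (C a * A) B = C a * Gterm d m A B := by
  have h : (1 - (X : R[X]) ^ (2 ^ (Nat.log 2 m))) * (C a * A)
      = C a * ((1 - (X : R[X]) ^ (2 ^ (Nat.log 2 m))) * A) := by ring
  simp only [Gterm, h, sliceC_C_mul]
  try ring

lemma Gterm_C_mul_right (d m : ℕ) (a : R) (A B : R[X]) :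
    Gterm d m A (C a * B) = C a * Gterm d m A B := by
  have h : (1 - (X : R[X]) ^ (2 ^ (Nat.log 2 m))) * (C a * B)
      = C a * ((1 - (X : R[X]) ^ (2 ^ (Nat.log 2 m))) * B) := by ring
  simp only [Gterm, h, sliceC_C_mul]
  try ring

lemma RHSfun_add_left (d : ℕ) (A₁ A₂ B : R[X]) :
    RHSfun d (A₁ + A₂) B = RHSfun d A₁ B + RHSfun d A₂ B := by
  simp only [RHSfun, hadamard_add_left, Gterm_add_left, Finset.sum_add_distrib]
  try ring

lemma RHSfun_add_right (d : ℕ) (A B₁ B₂ : R[X]) :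
    RHSfun d A (B₁ + B₂) = RHSfun d A B₁ + RHSfun d A B₂ := by
  simp only [RHSfun, hadamard_add_right, Gterm_add_right, Finset.sum_add_distrib]
  try ring

lemma RHSfun_C_mul_left (d : ℕ) (a : R) (A B : R[X]) :
    RHSfun d (C a * A) B = C a * RHSfun d A B := by
  simp only [RHSfun, hadamard_C_mul_left, Gterm_C_mul_left, ← Finset.mul_sum]
  try ring

lemma RHSfun_C_mul_right (d : ℕ) (a : R) (A B : R[X]) :
    RHSfun d A (C a * B) = C a * RHSfun d A B := by
  simp only [RHSfun, hadamard_C_mul_right, Gterm_C_mul_right, ← Finset.mul_sum]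
  try ring

lemma RHSfun_zero_left (d : ℕ) (B : R[X]) : RHSfun d 0 B = 0 := by
  have h := RHSfun_C_mul_left d (0 : R) 0 B
  simpa using h

lemma RHSfun_zero_right (d : ℕ) (A : R[X]) : RHSfun d A 0 = 0 := by
  have h := RHSfun_C_mul_right d (0 : R) A 0
  simpa using h

lemma RHSfun_sum_left (d : ℕ) (s : Finset ℕ) (f : ℕ → R[X]) (B : R[X]) :
    RHSfun d (∑ i ∈ s, f i) B = ∑ i ∈ s, RHSfun d (f i) B := by
  induction s using Finset.cons_induction with
  | empty => simpa using RHSfun_zero_left d B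
  | cons a s ha ih => rw [Finset.sum_cons, RHSfun_add_left, ih, Finset.sum_cons]

lemma RHSfun_sum_right (d : ℕ) (s : Finset ℕ) (f : ℕ → R[X]) (A : R[X]) :
    RHSfun d A (∑ i ∈ s, f i) = ∑ i ∈ s, RHSfun d A (f i) := by
  induction s using Finset.cons_induction with
  | empty => simpa using RHSfun_zero_right d A
  | cons a s ha ih => rw [Finset.sum_cons, RHSfun_add_right, ih, Finset.sum_cons]

lemma RHSfun_X_pow (d u v : ℕ) (hu : u < 2 ^ d) (hv : v < 2 ^ d) :
    RHSfun d ((X : R[X]) ^ u) ((X : R[X]) ^ v) = (X : R[X]) ^ u * (X : R[X]) ^ v := by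
  simp only [RHSfun]
  exact main_mono d u v hu hv

lemma RHSfun_eq (d : ℕ) (A B : R[X]) (hA : A.natDegree < 2 ^ d) (hB : B.natDegree < 2 ^ d) :
    RHSfun d A B = A * B := by
  conv_lhs => rw [A.as_sum_range' _ hA, B.as_sum_range' _ hB]
  conv_rhs => rw [A.as_sum_range' _ hA, B.as_sum_range' _ hB]
  rw [RHSfun_sum_left, Finset.sum_mul_sum]
  refine Finset.sum_congr rfl fun u hu => ?_
  rw [RHSfun_sum_right]
  refine Finset.sum_congr rfl fun v hv => ?_
  rw [← Polynomial.C_mul_X_pow_eq_monomial, ← Polynomial.C_mul_X_pow_eq_monomial,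
    RHSfun_C_mul_left, RHSfun_C_mul_right,
    RHSfun_X_pow d u v (Finset.mem_range.1 hu) (Finset.mem_range.1 hv)]
  ring

end PFK

/-- Partially flattened Karatsuba formula.  Here `∑_{i<2^j} X^i` stands for the
polynomial `(1-x^{2^j})/(1-x)`, `(∑_{i<2^(d-L-1)} X^(2^(L+1)·i))·X^m` stands for
`x^m (1-x^n)/(1-x^{2^(L+1)})` (with `L = ⌊log₂ m⌋`), and exact division by `x^m`
is expressed via division by the monic polynomial `X^m`. -/
theorem partially_flattened_karatsuba {R : Type*} [CommRing R]
    (d : ℕ) (hd : 1 ≤ d) (A B : R[X])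
    (hA : A.natDegree < 2 ^ d) (hB : B.natDegree < 2 ^ d) :
    A * B =
      (∑ i ∈ Finset.range (2 ^ d), (X : R[X]) ^ i) * hadamard A B -
        ∑ m ∈ Finset.Icc 1 (2 ^ d - 1),
          ((∑ i ∈ Finset.range (2 ^ (Nat.log 2 m)), (X : R[X]) ^ i) *
            hadamard
              ((∑ i ∈ Finset.range (2 ^ (d - Nat.log 2 m - 1)),
                  (X : R[X]) ^ (2 ^ (Nat.log 2 m + 1) * i)) * X ^ m)
              ((1 - (X : R[X]) ^ (2 ^ (Nat.log 2 m))) * A) *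
            hadamard
              ((∑ i ∈ Finset.range (2 ^ (d - Nat.log 2 m - 1)),
                  (X : R[X]) ^ (2 ^ (Nat.log 2 m + 1) * i)) * X ^ m)
              ((1 - (X : R[X]) ^ (2 ^ (Nat.log 2 m))) * B)) /ₘ (X ^ m) := by
  rw [Finset.sum_congr rfl (fun m _ => PFK.term_eq_Gterm d m A B)]
  exact (PFK.RHSfun_eq d A B hA hB).symm
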